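/- Let v : ℝ → ℝ be six times continuously differentiable, x₀ ∈ ℝ, and suppose v′(x₀) ≠ 0. Fix real parameters p > 0 and q ≥ 1. For h > 0 define the cell averages v̄_j(h), j = −2, …, 2, the Jiang–Shu smoothness indicators β₀(h), β₁(h), β₂(h), and the WENO-ZL global smoothness indicator τ₅^{ZL}(h) = (1/p)|ln((1 + β₀(h))/(1 + β₂(h)))|. Set d₀ = 1/10, d₁ = 3/5, d₂ = 3/10 and (with ε = 0) define α_s(h) = d_s(1 + (τ₅^{ZL}(h)/β_s(h))^q) and ω_s(h) = α_s(h)/(α₀(h) + α₁(h) + α₂(h)). Then there exists h₀ > 0 such that β_s(h) > 0 for all 0 < h < h₀ and s = 0, 1, 2, and for each s the difference ω_s(h) − d_s is O(h^{3q}) as h → 0⁺. -/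

import Mathlib

open Filter Topology Asymptotics

/-- Cell average of `v` over the cell `[x₀+(j-1/2)h, x₀+(j+1/2)h]`. -/
noncomputable def cellAvg (v : ℝ → ℝ) (x₀ h j : ℝ) : ℝ :=
  (1 / h) * ∫ t in (x₀ + (j - 1 / 2) * h)..(x₀ + (j + 1 / 2) * h), v t

/-- The Jiang–Shu smoothness indicator `β₀`. -/
noncomputable def beta0 (v : ℝ → ℝ) (x₀ h : ℝ) : ℝ :=
  (13 / 12) * (cellAvg v x₀ h (-2) - 2 * cellAvg v x₀ h (-1) + cellAvg v x₀ h 0) ^ 2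
    + (1 / 4) * (cellAvg v x₀ h (-2) - 4 * cellAvg v x₀ h (-1) + 3 * cellAvg v x₀ h 0) ^ 2

/-- The Jiang–Shu smoothness indicator `β₁`. -/
noncomputable def beta1 (v : ℝ → ℝ) (x₀ h : ℝ) : ℝ :=
  (13 / 12) * (cellAvg v x₀ h (-1) - 2 * cellAvg v x₀ h 0 + cellAvg v x₀ h 1) ^ 2
    + (1 / 4) * (cellAvg v x₀ h (-1) - cellAvg v x₀ h 1) ^ 2

/-- The Jiang–Shu smoothness indicator `β₂`. -/
noncomputable def beta2 (v : ℝ → ℝ) (x₀ h : ℝ) : ℝ :=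
  (13 / 12) * (cellAvg v x₀ h 0 - 2 * cellAvg v x₀ h 1 + cellAvg v x₀ h 2) ^ 2
    + (1 / 4) * (3 * cellAvg v x₀ h 0 - 4 * cellAvg v x₀ h 1 + cellAvg v x₀ h 2) ^ 2

/-- The vector of Jiang–Shu smoothness indicators. -/
noncomputable def betaV (v : ℝ → ℝ) (x₀ h : ℝ) : Fin 3 → ℝ :=
  ![beta0 v x₀ h, beta1 v x₀ h, beta2 v x₀ h]

/-- The linear weights of the fifth-order WENO reconstruction at the right cell boundary. -/
noncomputable def dLin : Fin 3 → ℝ := ![1 / 10, 3 / 5, 3 / 10]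

/-- The WENO-ZL global smoothness indicator `τ₅^{ZL} = (1/p)|ln((1+β₀)/(1+β₂))|`. -/
noncomputable def tauZL (v : ℝ → ℝ) (x₀ p h : ℝ) : ℝ :=
  (1 / p) * |Real.log ((1 + beta0 v x₀ h) / (1 + beta2 v x₀ h))|


open Set
set_option maxHeartbeats 1000000


lemma taylorO (x₀ : ℝ) : ∀ (n : ℕ) (F : ℝ → ℝ), ContDiff ℝ n F →
    (fun x => F x - ∑ k ∈ Finset.range (n+1),
        iteratedDeriv k F x₀ / (Nat.factorial k) * (x - x₀) ^ k)
      =O[𝓝 x₀] fun x => (x - x₀) ^ n := by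
  intro n
  induction n with
  | zero =>
    intro F hF
    simp only [Finset.range_one, Finset.sum_singleton, iteratedDeriv_zero, pow_zero]
    have h0 : Tendsto (fun x => F x - F x₀ / (Nat.factorial 0) * 1) (𝓝 x₀) (𝓝 (F x₀ - F x₀ / (Nat.factorial 0) * 1)) :=
      (hF.continuous.tendsto x₀).sub tendsto_const_nhds
    have h1 : (F x₀ - F x₀ / (Nat.factorial 0) * 1) = 0 := by simp
    rw [h1] at h0
    simpa using h0.isBigO_one ℝ
  | succ n ih =>
    intro F hF
    have hn1 : ((n:WithTop ℕ∞) + 1) = ((n+1 : ℕ) : WithTop ℕ∞) := by push_cast; ring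
    have hF' : ContDiff ℝ n (deriv F) := by
      have := (contDiff_succ_iff_deriv (n := (n : WithTop ℕ∞)) (f := F)).mp (by rw [hn1]; exact hF)
      exact this.2.2
    have hFd : Differentiable ℝ F := by
      have := (contDiff_succ_iff_deriv (n := (n : WithTop ℕ∞)) (f := F)).mp (by rw [hn1]; exact hF)
      exact this.1
    have ihd := ih (deriv F) hF'
    rw [isBigO_iff] at ihd
    obtain ⟨C, hC⟩ := ihd
    rw [Metric.eventually_nhds_iff] at hC
    obtain ⟨δ, hδ, hball⟩ := hC
    -- the function G and its derivative
    set a : ℕ → ℝ := fun k => iteratedDeriv k F x₀ with ha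
    set G : ℝ → ℝ := fun x => F x - ∑ k ∈ Finset.range (n+2),
        a k / (Nat.factorial k) * (x - x₀) ^ k with hG
    set G' : ℝ → ℝ := fun x => deriv F x - ∑ k ∈ Finset.range (n+1),
        iteratedDeriv k (deriv F) x₀ / (Nat.factorial k) * (x - x₀) ^ k with hG'
    have hGd : ∀ x, HasDerivAt G (G' x) x := by
      intro x
      have hsum : HasDerivAt (fun x => ∑ k ∈ Finset.range (n+2), a k / (Nat.factorial k) * (x - x₀) ^ k)
          (∑ k ∈ Finset.range (n+2), a k / (Nat.factorial k) * ((k:ℝ) * (x - x₀) ^ (k-1) * 1)) x := by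
        apply HasDerivAt.fun_sum
        intro k _
        exact (((hasDerivAt_id x).sub_const x₀).pow k).const_mul _
      have hre : (∑ k ∈ Finset.range (n+2), a k / (Nat.factorial k) * ((k:ℝ) * (x - x₀) ^ (k-1) * 1))
          = ∑ k ∈ Finset.range (n+1), iteratedDeriv k (deriv F) x₀ / (Nat.factorial k) * (x - x₀) ^ k := by
        rw [Finset.sum_range_succ']
        simp only [Nat.cast_zero, pow_zero, Nat.factorial_zero]
        rw [show a 0 / (1:ℕ) * (0 * (x - x₀) ^ (0-1) * 1) = 0 by simp]
        rw [add_zero]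
        apply Finset.sum_congr rfl
        intro k _
        rw [← iteratedDeriv_succ']
        have : a (k+1) = iteratedDeriv (k+1) F x₀ := rfl
        rw [this, Nat.add_sub_cancel, Nat.factorial_succ]
        have hk : ((k+1:ℕ):ℝ) ≠ 0 := by positivity
        have hkf : ((Nat.factorial k : ℕ):ℝ) ≠ 0 := by exact_mod_cast Nat.factorial_ne_zero k
        push_cast
        field_simp
      exact ((hFd x).hasDerivAt.sub (hre ▸ hsum))
    have hG0 : G x₀ = 0 := by
      simp only [hG]
      rw [Finset.sum_eq_single 0]
      · simp [ha]
      · intro k _ hk; simp [sub_self, zero_pow hk]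
      · simp
    rw [isBigO_iff]
    refine ⟨|C|, ?_⟩
    rw [Metric.eventually_nhds_iff]
    refine ⟨δ, hδ, fun x hx => ?_⟩
    have key : ‖G x - G x₀‖ ≤ (|C| * |x - x₀| ^ n) * ‖x - x₀‖ := by
      apply Convex.norm_image_sub_le_of_norm_hasDerivWithin_le
        (f' := G') (s := Metric.closedBall x₀ |x - x₀|)
      · intro y _; exact (hGd y).hasDerivWithinAt
      · intro y hy
        have hyd : dist y x₀ < δ := lt_of_le_of_lt (Metric.mem_closedBall.mp hy) hx
        have := hball hyd
        calc ‖G' y‖ ≤ C * ‖(y - x₀) ^ n‖ := this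
          _ ≤ |C| * |x - x₀| ^ n := by
              rw [Real.norm_eq_abs, abs_pow]
              have h1 : |y - x₀| ≤ |x - x₀| := by
                have := Metric.mem_closedBall.mp hy
                rwa [Real.dist_eq] at this
              calc C * |y - x₀| ^ n ≤ |C| * |y - x₀| ^ n := by
                    apply mul_le_mul_of_nonneg_right (le_abs_self C) (by positivity)
                _ ≤ |C| * |x - x₀| ^ n :=
                    mul_le_mul_of_nonneg_left (pow_le_pow_left₀ (abs_nonneg _) h1 n) (abs_nonneg C)
      · exact convex_closedBall _ _
      · exact Metric.mem_closedBall_self (abs_nonneg _)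
      · exact Metric.mem_closedBall.mpr (le_of_eq (Real.dist_eq x x₀))
    rw [hG0, sub_zero] at key
    calc ‖G x‖ ≤ (|C| * |x - x₀| ^ n) * ‖x - x₀‖ := key
      _ = |C| * ‖(x - x₀) ^ (n+1)‖ := by
          rw [Real.norm_eq_abs, Real.norm_eq_abs, abs_pow]
          ring


-- helper: dividing an O(h^{n+1}) at 0 by h gives O(h^n) on the right filter
lemma divO (R : ℝ → ℝ) (n : ℕ) (hR : R =O[𝓝 (0:ℝ)] fun h => h^(n+1)) :
    (fun h => R h / h) =O[𝓝[>](0:ℝ)] fun h => h^n := by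
  rw [isBigO_iff] at hR ⊢
  obtain ⟨C, hC⟩ := hR
  refine ⟨C, ?_⟩
  filter_upwards [hC.filter_mono nhdsWithin_le_nhds, eventually_mem_nhdsWithin] with h h1 h2
  have hh : (0:ℝ) < h := h2
  rw [Real.norm_eq_abs, Real.norm_eq_abs, abs_div, abs_pow] at *
  rw [div_le_iff₀ (abs_pos.mpr hh.ne')]
  calc |R h| ≤ C * |h|^(n+1) := h1
    _ = C * |h|^n * |h| := by ring
lemma hEpow (m n : ℕ) (h : n ≤ m) : (fun h : ℝ => h^m) =O[𝓝[>](0:ℝ)] fun h => h^n := by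
  rw [isBigO_iff]
  refine ⟨1, ?_⟩
  have h01 : Ioo (0:ℝ) 1 ∈ 𝓝[>](0:ℝ)  := (nhdsGT_basis (0:ℝ)).mem_of_mem one_pos
  filter_upwards [h01] with x hx
  rw [Real.norm_eq_abs, Real.norm_eq_abs, abs_pow, abs_pow, one_mul]
  exact pow_le_pow_of_le_one (abs_nonneg x) (by rw [abs_of_pos hx.1]; exact hx.2.le) h
lemma mulO (n m : ℕ) (hmn : m ≤ n) (g : ℝ → ℝ) (hg : Continuous g) :
    (fun h : ℝ => h^n * g h) =O[𝓝[>](0:ℝ)] fun h => h^m := by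
  have h1 : (fun h:ℝ => h^n * g h) =O[𝓝[>](0:ℝ)] (fun h:ℝ => h^n * 1) :=
    (isBigO_refl _ _).mul (((hg.tendsto 0).mono_left nhdsWithin_le_nhds).isBigO_one ℝ)
  simp only [mul_one] at h1
  exact h1.trans (hEpow n m hmn)
lemma logdiff (a b : ℝ) (ha : 0 ≤ a) (hb : 0 ≤ b) : |Real.log ((1+a)/(1+b))| ≤ |a - b| := by
  have key : ∀ c d : ℝ, 0 ≤ c → 0 ≤ d → Real.log (1+c) - Real.log (1+d) ≤ |c - d| := by
    intro c d hc hd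
    have h1c : (0:ℝ) < 1 + c := by linarith
    have h1d : (0:ℝ) < 1 + d := by linarith
    rw [← Real.log_div h1c.ne' h1d.ne']
    calc Real.log ((1+c)/(1+d)) ≤ (1+c)/(1+d) - 1 := Real.log_le_sub_one_of_pos (by positivity)
      _ = (c - d)/(1+d) := by field_simp; ring
      _ ≤ |c - d| := by
          rw [div_le_iff₀ h1d]
          nlinarith [le_abs_self (c-d), abs_nonneg (c-d)]
  have h1a : (0:ℝ) < 1 + a := by linarith
  have h1b : (0:ℝ) < 1 + b := by linarith
  rw [Real.log_div h1a.ne' h1b.ne']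
  rw [abs_le]
  constructor
  · have := key b a hb ha
    rw [abs_sub_comm] at this
    linarith
  · exact key a b ha hb


lemma taylorOc (x₀ : ℝ) (n : ℕ) (F : ℝ → ℝ) (hF : ContDiff ℝ n F) (c : ℝ) :
    (fun h : ℝ => F (x₀ + c*h) - ∑ k ∈ Finset.range (n+1),
        iteratedDeriv k F x₀ / (Nat.factorial k) * (c*h) ^ k)
      =O[𝓝 (0:ℝ)] fun h => h ^ n := by
  have ht : Tendsto (fun h : ℝ => x₀ + c*h) (𝓝 0) (𝓝 x₀) := by
    have : Continuous (fun h : ℝ => x₀ + c*h) := by continuity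
    simpa using this.tendsto 0
  have h1 := (taylorO x₀ n F hF).comp_tendsto ht
  simp only [Function.comp_def, add_sub_cancel_left] at h1
  exact h1.trans (by
    have : (fun h : ℝ => (c*h)^n) = (fun h : ℝ => c^n * h^n) := by funext h; ring
    rw [this]
    exact isBigO_const_mul_self (c^n) _ _)

lemma cellO (v : ℝ → ℝ) (hv : ContDiff ℝ 6 v) (x₀ : ℝ) (j : ℝ) :
    (fun h : ℝ => cellAvg v x₀ h j -
       (v x₀ + (deriv v x₀) * (((j+1/2)^2-(j-1/2)^2)/2) * h
          + (iteratedDeriv 2 v x₀) * (((j+1/2)^3-(j-1/2)^3)/6) * h^2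
          + (iteratedDeriv 3 v x₀) * (((j+1/2)^4-(j-1/2)^4)/24) * h^3))
      =O[𝓝[>](0:ℝ)] fun h => h^4 := by
  set V : ℝ → ℝ := fun x => ∫ t in x₀..x, v t with hV
  have hVder : ∀ x, HasDerivAt V (v x) x := fun x =>
    (hv.continuous.integral_hasStrictDerivAt x₀ x).hasDerivAt
  have hderiv : deriv V = v := funext fun x => (hVder x).deriv
  have hv4 : ContDiff ℝ 4 v := hv.of_le (by norm_num)
  have hV5 : ContDiff ℝ (5:ℕ) V := by
    have h1 : ContDiff ℝ ((4:WithTop ℕ∞)+1) V := by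
      rw [contDiff_succ_iff_deriv]
      refine ⟨fun x => (hVder x).differentiableAt, ?_, by rw [hderiv]; exact hv4⟩
      intro hcon
      exact absurd hcon (by norm_num)
    exact_mod_cast h1
  -- Taylor coefficients of V in terms of v
  have gk : ∀ k : ℕ, iteratedDeriv (k+1) V = iteratedDeriv k v := fun k => by
    rw [iteratedDeriv_succ', hderiv]
  have g0 : iteratedDeriv 0 V = V := iteratedDeriv_zero
  have g1 : iteratedDeriv 1 V = v := by rw [iteratedDeriv_one, hderiv]
  have g2 : iteratedDeriv 2 V = iteratedDeriv 1 v := gk 1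
  have g3 : iteratedDeriv 3 V = iteratedDeriv 2 v := gk 2
  have g4 : iteratedDeriv 4 V = iteratedDeriv 3 v := gk 3
  have g5 : iteratedDeriv 5 V = iteratedDeriv 4 v := gk 4
  have hb := taylorOc x₀ 5 V hV5 (j+1/2)
  have ha := taylorOc x₀ 5 V hV5 (j-1/2)
  have hR := hb.sub ha
  have hRdiv := divO _ 4 (by exact_mod_cast hR)
  have hlast := mulO 4 4 le_rfl (fun _ => iteratedDeriv 4 v x₀ * ((j+1/2)^5-(j-1/2)^5)/120) continuous_const
  have hsum := hRdiv.add hlast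
  refine (hsum.congr' ?_ (by rfl)).mono le_rfl
  filter_upwards [eventually_mem_nhdsWithin] with h hh
  have hh0 : (0:ℝ) < h := hh
  have hcell : cellAvg v x₀ h j = (V (x₀ + (j+1/2)*h) - V (x₀ + (j-1/2)*h)) / h := by
    rw [cellAvg, hV]
    rw [← intervalIntegral.integral_interval_sub_left
      (hv.continuous.intervalIntegrable _ _) (hv.continuous.intervalIntegrable _ _)]
    ring
  rw [hcell]
  simp only [Finset.sum_range_succ, Finset.range_one, Finset.sum_singleton]
  have hfac : ∀ m : ℕ, ((Nat.factorial m : ℕ) : ℝ) ≠ 0 := fun m => by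
    exact_mod_cast (Nat.factorial_ne_zero m)
  simp only [g0, g1, g2, g3, g4, g5, iteratedDeriv_one, Nat.factorial]
  push_cast
  field_simp
  ring

lemma sqO (X L : ℝ → ℝ) (m : ℕ) (hm : m ≤ 4)
    (hX : (fun h => X h - L h) =O[𝓝[>](0:ℝ)] fun h => h^4)
    (hL : L =O[𝓝[>](0:ℝ)] fun h => h^m) :
    (fun h => X h^2 - L h^2) =O[𝓝[>](0:ℝ)] fun h => h^(4+m) := by
  have h1 : (fun h => X h + L h) =O[𝓝[>](0:ℝ)] fun h => h^m :=
    (((hX.trans (hEpow 4 m hm)).add (hL.const_mul_left 2)).congr_left (fun h => by ring))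
  exact (hX.mul h1).congr (fun h => by ring) (fun h => by rw [pow_add])

lemma lowbound (f : ℝ → ℝ) (a : ℝ) (ha : 0 < a)
    (hf : (fun h => f h - a*h^2) =O[𝓝[>](0:ℝ)] fun h => h^3) :
    ∀ᶠ h in 𝓝[>](0:ℝ), a/2*h^2 ≤ f h := by
  rw [isBigO_iff] at hf
  obtain ⟨C, hC⟩ := hf
  have hδ : (0:ℝ) < min 1 (a/(2*(|C|+1))) := by positivity
  have hsm : Ioo (0:ℝ) (min 1 (a/(2*(|C|+1)))) ∈ 𝓝[>](0:ℝ) :=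
    (nhdsGT_basis (0:ℝ)).mem_of_mem hδ
  filter_upwards [hC, Filter.eventually_of_mem hsm fun x hx => hx] with h h1 h2
  have hh : 0 < h := h2.1
  have hlt : h < a/(2*(|C|+1)) := lt_of_lt_of_le h2.2 (min_le_right _ _)
  have habs : |f h - a*h^2| ≤ (|C|+1)*h^3 := by
    rw [Real.norm_eq_abs, Real.norm_eq_abs, abs_pow, abs_of_pos hh] at h1
    nlinarith [pow_pos hh 3, le_abs_self C]
  have h2' : h*(2*(|C|+1)) < a := (lt_div_iff₀ (by positivity)).mp hlt
  have h3 : (|C|+1)*h^3 ≤ a/2*h^2 := by nlinarith [pow_pos hh 2]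
  have := abs_le.mp habs
  nlinarith

lemma weightBound (d t0 t1 t2 ts M : ℝ) (hd0 : 0 < d) (hd1 : d ≤ 1)
    (h0 : 0 ≤ t0) (h1 : 0 ≤ t1) (h2 : 0 ≤ t2) (hts0 : 0 ≤ ts)
    (hb0 : t0 ≤ M) (hb1 : t1 ≤ M) (hb2 : t2 ≤ M) (hbs : ts ≤ M) :
    |d * (1 + ts) / (1/10*(1+t0) + 3/5*(1+t1) + 3/10*(1+t2)) - d| ≤ 4 * M := by
  set T : ℝ := 1/10*(1+t0) + 3/5*(1+t1) + 3/10*(1+t2) with hT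
  have hT1 : (1:ℝ) ≤ T := by rw [hT]; linarith
  have hTpos : (0:ℝ) < T := by linarith
  have hM0 : 0 ≤ M := le_trans h0 hb0
  have e1 : d*(1+ts)/T - d = (d*(ts - (T-1)))/T := by field_simp; ring
  rw [e1, abs_div, abs_of_pos hTpos]
  calc |d*(ts-(T-1))|/T ≤ |d*(ts-(T-1))| := div_le_self (abs_nonneg _) hT1
    _ = d*|ts-(T-1)| := by rw [abs_mul, abs_of_pos hd0]
    _ ≤ 1*(ts+(T-1)) := by
        apply mul_le_mul hd1 ?_ (abs_nonneg _) zero_le_one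
        rw [abs_le]
        refine ⟨by rw [hT]; linarith, by rw [hT]; linarith⟩
    _ ≤ 4*M := by rw [hT]; linarith


/-- At a non-critical point (`v′(x₀) ≠ 0`) of a `C⁶` function, the smoothness indicators are
eventually positive and the WENO-ZL nonlinear weights (with tuners `p > 0`, `q ≥ 1` and
`ε = 0`) satisfy `ω_s − d_s = O(h^{3q})` as `h → 0⁺`. -/
theorem stmt17 (v : ℝ → ℝ) (hv : ContDiff ℝ 6 v) (x₀ : ℝ) (hx : deriv v x₀ ≠ 0)
    (p q : ℝ) (hp : 0 < p) (hq : 1 ≤ q) :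
    ∃ h₀ : ℝ, 0 < h₀ ∧
      (∀ h : ℝ, 0 < h → h < h₀ → ∀ s : Fin 3, 0 < betaV v x₀ h s) ∧
      (∀ s : Fin 3,
        (fun h : ℝ =>
            (dLin s * (1 + (tauZL v x₀ p h / betaV v x₀ h s) ^ q))
              / (∑ r : Fin 3, dLin r * (1 + (tauZL v x₀ p h / betaV v x₀ h r) ^ q)) - dLin s)
          =O[𝓝[>] (0 : ℝ)] (fun h => h ^ (3 * q))) := by
  have hc := cellO v hv x₀
  set u1 : ℝ := deriv v x₀ with hu1def
  set u2 : ℝ := iteratedDeriv 2 v x₀ with hu2def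
  set u3 : ℝ := iteratedDeriv 3 v x₀ with hu3def
  have hu1sq : 0 < u1^2 := lt_of_le_of_ne (sq_nonneg u1) (Ne.symm (pow_ne_zero 2 hx))
  -- the six linear combinations
  have hA0 : (fun h : ℝ => (cellAvg v x₀ h (-2) - 2*cellAvg v x₀ h (-1) + cellAvg v x₀ h 0)
      - (u2*h^2 - u3*h^3)) =O[𝓝[>](0:ℝ)] fun h => h^4 :=
    (((hc (-2)).sub ((hc (-1)).const_mul_left 2)).add (hc 0)).congr_left fun h => by ring
  have hB0 : (fun h : ℝ => (cellAvg v x₀ h (-2) - 4*cellAvg v x₀ h (-1) + 3*cellAvg v x₀ h 0)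
      - (2*u1*h - (7/12)*u3*h^3)) =O[𝓝[>](0:ℝ)] fun h => h^4 :=
    (((hc (-2)).sub ((hc (-1)).const_mul_left 4)).add ((hc 0).const_mul_left 3)).congr_left
      fun h => by ring
  have hA1 : (fun h : ℝ => (cellAvg v x₀ h (-1) - 2*cellAvg v x₀ h 0 + cellAvg v x₀ h 1)
      - (u2*h^2)) =O[𝓝[>](0:ℝ)] fun h => h^4 :=
    (((hc (-1)).sub ((hc 0).const_mul_left 2)).add (hc 1)).congr_left fun h => by ring
  have hB1 : (fun h : ℝ => (cellAvg v x₀ h (-1) - cellAvg v x₀ h 1)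
      - (-2*u1*h - (5/12)*u3*h^3)) =O[𝓝[>](0:ℝ)] fun h => h^4 :=
    ((hc (-1)).sub (hc 1)).congr_left fun h => by ring
  have hA2 : (fun h : ℝ => (cellAvg v x₀ h 0 - 2*cellAvg v x₀ h 1 + cellAvg v x₀ h 2)
      - (u2*h^2 + u3*h^3)) =O[𝓝[>](0:ℝ)] fun h => h^4 :=
    (((hc 0).sub ((hc 1).const_mul_left 2)).add (hc 2)).congr_left fun h => by ring
  have hB2 : (fun h : ℝ => (3*cellAvg v x₀ h 0 - 4*cellAvg v x₀ h 1 + cellAvg v x₀ h 2)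
      - (-2*u1*h + (7/12)*u3*h^3)) =O[𝓝[>](0:ℝ)] fun h => h^4 :=
    ((((hc 0).const_mul_left 3).sub ((hc 1).const_mul_left 4)).add (hc 2)).congr_left
      fun h => by ring
  -- bounds on the polynomial parts
  have hLA0 : (fun h : ℝ => u2*h^2 - u3*h^3) =O[𝓝[>](0:ℝ)] fun h => h^2 :=
    (mulO 2 2 le_rfl (fun h => u2 - u3*h) (by fun_prop)).congr_left fun h => by ring
  have hLA1 : (fun h : ℝ => u2*h^2) =O[𝓝[>](0:ℝ)] fun h => h^2 :=
    (mulO 2 2 le_rfl (fun _ => u2) (by fun_prop)).congr_left fun h => by ring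
  have hLA2 : (fun h : ℝ => u2*h^2 + u3*h^3) =O[𝓝[>](0:ℝ)] fun h => h^2 :=
    (mulO 2 2 le_rfl (fun h => u2 + u3*h) (by fun_prop)).congr_left fun h => by ring
  have hLB0 : (fun h : ℝ => 2*u1*h - (7/12)*u3*h^3) =O[𝓝[>](0:ℝ)] fun h => h^1 :=
    (mulO 1 1 le_rfl (fun h => 2*u1 - (7/12)*u3*h^2) (by fun_prop)).congr_left fun h => by ring
  have hLB1 : (fun h : ℝ => -2*u1*h - (5/12)*u3*h^3) =O[𝓝[>](0:ℝ)] fun h => h^1 :=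
    (mulO 1 1 le_rfl (fun h => -2*u1 - (5/12)*u3*h^2) (by fun_prop)).congr_left fun h => by ring
  have hLB2 : (fun h : ℝ => -2*u1*h + (7/12)*u3*h^3) =O[𝓝[>](0:ℝ)] fun h => h^1 :=
    (mulO 1 1 le_rfl (fun h => -2*u1 + (7/12)*u3*h^2) (by fun_prop)).congr_left fun h => by ring
  -- squares
  have sqA0 := sqO _ _ 2 (by norm_num) hA0 hLA0
  have sqA1 := sqO _ _ 2 (by norm_num) hA1 hLA1
  have sqA2 := sqO _ _ 2 (by norm_num) hA2 hLA2
  have sqB0 := sqO _ _ 1 (by norm_num) hB0 hLB0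
  have sqB1 := sqO _ _ 1 (by norm_num) hB1 hLB1
  have sqB2 := sqO _ _ 1 (by norm_num) hB2 hLB2
  norm_num only at sqA0 sqA1 sqA2 sqB0 sqB1 sqB2
  -- beta0 - beta2 = O(h^5)
  have hbd : (fun h : ℝ => beta0 v x₀ h - beta2 v x₀ h) =O[𝓝[>](0:ℝ)] fun h => h^5 := by
    have t1 := (sqA0.trans (hEpow 6 5 (by norm_num))).const_mul_left (13/12)
    have t2 := (sqA2.trans (hEpow 6 5 (by norm_num))).const_mul_left (13/12)
    have t3 := sqB0.const_mul_left (1/4)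
    have t4 := sqB2.const_mul_left (1/4)
    have t5 := mulO 5 5 le_rfl (fun _ => -(13/3)*u2*u3) continuous_const
    refine (((t1.sub t2).add (t3.sub t4)).add t5).congr_left fun h => ?_
    simp only [beta0, beta2]; ring
  -- beta_s = u1^2 h^2 + O(h^3)
  have hlow0 : (fun h : ℝ => beta0 v x₀ h - u1^2*h^2) =O[𝓝[>](0:ℝ)] fun h => h^3 := by
    have t1 := sqA0.trans (hEpow 6 3 (by norm_num))
    have t2 := sqB0.trans (hEpow 5 3 (by norm_num))
    have t3 := mulO 4 3 (by norm_num)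
      (fun h => 13/12*(u2 - u3*h)^2 - (7/12)*u1*u3 + (49/576)*u3^2*h^2) (by fun_prop)
    refine ((t1.const_mul_left (13/12)).add ((t2.const_mul_left (1/4)).add t3)).congr_left
      fun h => ?_
    simp only [beta0]; ring
  have hlow1 : (fun h : ℝ => beta1 v x₀ h - u1^2*h^2) =O[𝓝[>](0:ℝ)] fun h => h^3 := by
    have t1 := sqA1.trans (hEpow 6 3 (by norm_num))
    have t2 := sqB1.trans (hEpow 5 3 (by norm_num))
    have t3 := mulO 4 3 (by norm_num)
      (fun h => 13/12*u2^2 + (5/12)*u1*u3 + (25/576)*u3^2*h^2) (by fun_prop)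
    refine ((t1.const_mul_left (13/12)).add ((t2.const_mul_left (1/4)).add t3)).congr_left
      fun h => ?_
    simp only [beta1]; ring
  have hlow2 : (fun h : ℝ => beta2 v x₀ h - u1^2*h^2) =O[𝓝[>](0:ℝ)] fun h => h^3 := by
    have t1 := sqA2.trans (hEpow 6 3 (by norm_num))
    have t2 := sqB2.trans (hEpow 5 3 (by norm_num))
    have t3 := mulO 4 3 (by norm_num)
      (fun h => 13/12*(u2 + u3*h)^2 - (7/12)*u1*u3 + (49/576)*u3^2*h^2) (by fun_prop)
    refine ((t1.const_mul_left (13/12)).add ((t2.const_mul_left (1/4)).add t3)).congr_left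
      fun h => ?_
    simp only [beta2]; ring
  have hb0 := lowbound _ _ hu1sq hlow0
  have hb1 := lowbound _ _ hu1sq hlow1
  have hb2 := lowbound _ _ hu1sq hlow2
  -- eventual positivity, extraction of h₀
  have hall : ∀ᶠ h in 𝓝[>](0:ℝ), ∀ s : Fin 3, 0 < betaV v x₀ h s := by
    filter_upwards [hb0, hb1, hb2, eventually_mem_nhdsWithin] with h p0 p1 p2 hh
    have hhp : (0:ℝ) < h := hh
    intro s
    fin_cases s
    · show (0:ℝ) < beta0 v x₀ h; nlinarith [pow_pos hhp 2]
    · show (0:ℝ) < beta1 v x₀ h; nlinarith [pow_pos hhp 2]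
    · show (0:ℝ) < beta2 v x₀ h; nlinarith [pow_pos hhp 2]
  rw [(nhdsGT_basis (0:ℝ)).eventually_iff] at hall
  obtain ⟨h₀, h₀pos, hall⟩ := hall
  refine ⟨h₀, h₀pos, fun h hh1 hh2 => hall ⟨hh1, hh2⟩, ?_⟩
  -- the big-O part
  rw [isBigO_iff] at hbd
  obtain ⟨C5, hC5⟩ := hbd
  set K : ℝ := (|C5|/p)/(u1^2/2) with hK
  have hK0 : 0 ≤ K := div_nonneg (div_nonneg (abs_nonneg _) hp.le) (by positivity)
  intro s
  rw [isBigO_iff]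
  refine ⟨4 * K^q, ?_⟩
  filter_upwards [hC5, hb0, hb1, hb2, eventually_mem_nhdsWithin] with h hC5h p0 p1 p2 hh
  have hhp : (0:ℝ) < h := hh
  have hq0 : (0:ℝ) ≤ q := by linarith
  -- tau bound
  have hβ0n : 0 ≤ beta0 v x₀ h := by simp only [beta0]; positivity
  have hβ2n : 0 ≤ beta2 v x₀ h := by simp only [beta2]; positivity
  have hτ0 : 0 ≤ tauZL v x₀ p h := by
    simp only [tauZL]
    exact mul_nonneg (by positivity) (abs_nonneg _)
  have hdabs : |beta0 v x₀ h - beta2 v x₀ h| ≤ |C5| * h^5 := by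
    rw [Real.norm_eq_abs, Real.norm_eq_abs, abs_pow, abs_of_pos hhp] at hC5h
    calc |beta0 v x₀ h - beta2 v x₀ h| ≤ C5 * h^5 := hC5h
      _ ≤ |C5| * h^5 := mul_le_mul_of_nonneg_right (le_abs_self _) (by positivity)
  have hτ : tauZL v x₀ p h ≤ (|C5|/p) * h^5 := by
    simp only [tauZL]
    calc (1/p) * |Real.log ((1 + beta0 v x₀ h) / (1 + beta2 v x₀ h))|
        ≤ (1/p) * (|C5| * h^5) := by
          apply mul_le_mul_of_nonneg_left _ (by positivity)
          exact (logdiff _ _ hβ0n hβ2n).trans hdabs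
      _ = (|C5|/p) * h^5 := by ring
  -- theta bounds
  have hbound : ∀ B : ℝ, u1^2/2*h^2 ≤ B →
      (tauZL v x₀ p h / B) ^ q ≤ K^q * h^(3*q) := by
    intro B hB
    have hBpos : 0 < B := lt_of_lt_of_le (by positivity) hB
    have hdiv : tauZL v x₀ p h / B ≤ K*h^3 := by
      calc tauZL v x₀ p h / B ≤ ((|C5|/p)*h^5)/(u1^2/2*h^2) :=
            div_le_div₀ (by positivity) hτ (by positivity) hB
        _ = K*h^3 := by rw [hK]; field_simp
    have hdiv0 : 0 ≤ tauZL v x₀ p h / B := div_nonneg hτ0 hBpos.le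
    calc (tauZL v x₀ p h / B) ^ q ≤ (K*h^3)^q := Real.rpow_le_rpow hdiv0 hdiv hq0
      _ = K^q * h^(3*q) := by
          rw [Real.mul_rpow hK0 (by positivity)]
          congr 1
          rw [← Real.rpow_natCast h 3, ← Real.rpow_mul hhp.le]
          norm_num
  have ht0' := hbound _ p0
  have ht1' := hbound _ p1
  have ht2' := hbound _ p2
  have hts : ∀ r : Fin 3, (tauZL v x₀ p h / betaV v x₀ h r) ^ q ≤ K^q * h^(3*q) ∧
      0 ≤ (tauZL v x₀ p h / betaV v x₀ h r) ^ q := by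
    intro r
    have hβr : u1^2/2*h^2 ≤ betaV v x₀ h r := by
      fin_cases r
      · exact p0
      · exact p1
      · exact p2
    exact ⟨hbound _ hβr, Real.rpow_nonneg (div_nonneg hτ0
      (le_trans (by positivity) hβr)) q⟩
  -- final estimate
  rw [Fin.sum_univ_three]
  rw [Real.norm_eq_abs, Real.norm_eq_abs]
  have hrpos : 0 < h ^ (3*q) := Real.rpow_pos_of_pos hhp _
  rw [abs_of_pos hrpos]
  have key := weightBound (dLin s) _ _ _ _ (K^q * h^(3*q))
    (by fin_cases s <;> norm_num [dLin]) (by fin_cases s <;> norm_num [dLin])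
    (hts 0).2 (hts 1).2 (hts 2).2 (hts s).2 (hts 0).1 (hts 1).1 (hts 2).1 (hts s).1
  have hdl0 : dLin 0 = 1/10 := by norm_num [dLin]
  have hdl1 : dLin 1 = 3/5 := by norm_num [dLin]
  have hdl2 : dLin 2 = 3/10 := by simp [dLin]
  rw [hdl0, hdl1, hdl2]
  calc |dLin s * (1 + (tauZL v x₀ p h / betaV v x₀ h s) ^ q) /
        (1/10*(1 + (tauZL v x₀ p h / betaV v x₀ h 0) ^ q)
          + 3/5*(1 + (tauZL v x₀ p h / betaV v x₀ h 1) ^ q)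
          + 3/10*(1 + (tauZL v x₀ p h / betaV v x₀ h 2) ^ q)) - dLin s|
      ≤ 4 * (K^q * h^(3*q)) := key
    _ = 4 * K^q * h^(3*q) := by ring
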